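/- Let k be a field and M a linearly ordered type of monomials whose strict order is well-founded. Let T be a set of monic polynomials in M →₀ k with associated one-step reduction relation →. Suppose that for every monomial m ∈ M and every pair of one-step reductions single(m,1) → g₁ and single(m,1) → g₂, the difference g₁ − g₂ lies in the k-linear span of the set of those h ∈ T with lead(h) < m. Call a monomial m ∈ M reduced if m ≠ lead(h) for every h ∈ T. Then the images of the polynomials single(m,1), for m ranging over the reduced monomials, under the quotient map M →₀ k → (M →₀ k)/span(T), form a linear basis of the quotient space (M →₀ k)/span(T). -/

import Mathlib

open Finsupp Relation

variable {k M : Type*}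

/-- The leading monomial of a nonzero polynomial `f : M →₀ k`: the maximum of its support. -/
noncomputable def leadMon [Zero k] [LinearOrder M] (f : M →₀ k) (hf : f ≠ 0) : M :=
  f.support.max' (Finsupp.support_nonempty_iff.mpr hf)

/-- A polynomial is monic if it is nonzero and its leading coefficient equals 1. -/
def IsMonic [Field k] [LinearOrder M] (f : M →₀ k) : Prop :=
  ∃ hf : f ≠ 0, f (leadMon f hf) = 1

/-- The one-step reduction relation associated with a set `T` of (monic) polynomials:
`f → g` iff there is `h ∈ T` with `f (lead h) ≠ 0` and `g = f - f (lead h) • h`. -/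
def StepRel [Field k] [LinearOrder M] (T : Set (M →₀ k)) (f g : M →₀ k) : Prop :=
  ∃ h ∈ T, ∃ hh : h ≠ 0, f (leadMon h hh) ≠ 0 ∧ g = f - f (leadMon h hh) • h

section Aux

variable [Field k] [LinearOrder M]

theorem le_leadMon {f : M →₀ k} (hf : f ≠ 0) {m : M} (hm : m ∈ f.support) :
    m ≤ leadMon f hf := f.support.le_max' m hm

/-- `m` is reduced wrt `T`. -/
abbrev Rd (T : Set (M →₀ k)) (m : M) : Prop := ∀ h ∈ T, ∀ hh : h ≠ 0, m ≠ leadMon h hh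

theorem not_rd {T : Set (M →₀ k)} {m : M} (hm : ¬ Rd T m) :
    ∃ h, h ∈ T ∧ ∃ hh : h ≠ 0, m = leadMon h hh := by
  unfold Rd at hm; push_neg at hm
  obtain ⟨h, h1, h2, h3⟩ := hm
  exact ⟨h, h1, h2, h3⟩

noncomputable def pick (T : Set (M →₀ k)) (m : M) (hm : ¬ Rd T m) : M →₀ k :=
  (not_rd hm).choose

theorem pick_mem (T : Set (M →₀ k)) (m : M) (hm : ¬ Rd T m) : pick T m hm ∈ T :=
  (not_rd hm).choose_spec.1

theorem pick_ne (T : Set (M →₀ k)) (m : M) (hm : ¬ Rd T m) : pick T m hm ≠ 0 :=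
  (not_rd hm).choose_spec.2.choose

theorem pick_lead (T : Set (M →₀ k)) (m : M) (hm : ¬ Rd T m) :
    leadMon (pick T m hm) (pick_ne T m hm) = m :=
  ((not_rd hm).choose_spec.2.choose_spec).symm

theorem support_sub_lt {h : M →₀ k} (hh : h ≠ 0) (hmonic : h (leadMon h hh) = 1)
    {m' : M} (hm' : m' ∈ (Finsupp.single (leadMon h hh) (1:k) - h).support) :
    m' < leadMon h hh := by
  have hne : (Finsupp.single (leadMon h hh) (1:k) - h) m' ≠ 0 := Finsupp.mem_support_iff.mp hm'
  rcases eq_or_ne m' (leadMon h hh) with rfl | hne'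
  · simp [hmonic] at hne
  · have hh' : h m' ≠ 0 := by
      simpa [Finsupp.single_eq_of_ne' (Ne.symm hne')] using hne
    exact lt_of_le_of_ne (le_leadMon hh (Finsupp.mem_support_iff.mpr hh')) hne'

theorem support_sub_lt' {h : M →₀ k} (hh : h ≠ 0) (hmonic : h (leadMon h hh) = 1)
    {m m' : M} (hl : leadMon h hh = m)
    (hm' : m' ∈ (Finsupp.single m (1:k) - h).support) : m' < m := by
  subst hl; exact support_sub_lt hh hmonic hm'

theorem mem_support_g_lt {T : Set (M →₀ k)} (hT : ∀ f ∈ T, IsMonic f) {m : M}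
    (hm : ¬ Rd T m) {x : M}
    (hx : x ∈ (Finsupp.single m (1:k) - pick T m hm).support) : x < m := by
  obtain ⟨hf, hmon⟩ := hT _ (pick_mem T m hm)
  exact support_sub_lt' (pick_ne T m hm) hmon (pick_lead T m hm) hx

open scoped Classical

variable (hwf : WellFounded ((· < ·) : M → M → Prop))
  (T : Set (M →₀ k)) (hT : ∀ f ∈ T, IsMonic f)

noncomputable def nf : M → ({m : M // Rd T m} →₀ k) :=
  hwf.fix fun m ih =>
    if hm : Rd T m then Finsupp.single ⟨m, hm⟩ 1
    else ∑ x ∈ (Finsupp.single m (1:k) - pick T m hm).support.attach,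
      (Finsupp.single m (1:k) - pick T m hm) x.1 • ih x.1 (mem_support_g_lt hT hm x.2)

theorem nf_eq (m : M) : nf hwf T hT m =
    if hm : Rd T m then Finsupp.single ⟨m, hm⟩ 1
    else ∑ x ∈ (Finsupp.single m (1:k) - pick T m hm).support,
      (Finsupp.single m (1:k) - pick T m hm) x • nf hwf T hT x := by
  rw [nf, WellFounded.fix_eq]
  split
  · rfl
  · rename_i hm
    exact Finset.sum_attach _
      (fun x => (Finsupp.single m (1:k) - pick T m hm) x • nf hwf T hT x)

theorem nf_rd {m : M} (hm : Rd T m) : nf hwf T hT m = Finsupp.single ⟨m, hm⟩ 1 := by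
  rw [nf_eq, dif_pos hm]

theorem nf_not {m : M} (hm : ¬ Rd T m) :
    nf hwf T hT m = Finsupp.linearCombination k (nf hwf T hT)
      (Finsupp.single m (1:k) - pick T m hm) := by
  rw [nf_eq, dif_neg hm, Finsupp.linearCombination_apply, Finsupp.sum]

end Aux

/-- Under the local confluence condition on monomials, the images of the
polynomials `single m 1`, for `m` ranging over the reduced monomials (those that
are not the leading monomial of any element of `T`), form a linear basis of the
quotient space `(M →₀ k) ⧸ span T`. -/
theorem reduced_monomials_basis_of_quotient [Field k] [LinearOrder M]
    (hwf : WellFounded ((· < ·) : M → M → Prop))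
    (T : Set (M →₀ k)) (hT : ∀ f ∈ T, IsMonic f)
    (hamb : ∀ m : M, ∀ g₁ g₂ : M →₀ k,
      StepRel T (Finsupp.single m 1) g₁ → StepRel T (Finsupp.single m 1) g₂ →
      g₁ - g₂ ∈ Submodule.span k {h : M →₀ k | h ∈ T ∧ ∃ hh : h ≠ 0, leadMon h hh < m}) :
    ∃ b : Module.Basis {m : M // ∀ h ∈ T, ∀ hh : h ≠ 0, m ≠ leadMon h hh} k
        ((M →₀ k) ⧸ Submodule.span k T),
      ∀ m : {m : M // ∀ h ∈ T, ∀ hh : h ≠ 0, m ≠ leadMon h hh},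
        b m = Submodule.Quotient.mk (Finsupp.single (m : M) (1 : k)) := by
  classical
  set N : (M →₀ k) →ₗ[k] ({m : M // Rd T m} →₀ k) :=
    Finsupp.linearCombination k (nf hwf T hT) with hN
  set E : ({m : M // Rd T m} →₀ k) →ₗ[k] (M →₀ k) :=
    Finsupp.lmapDomain k k (Subtype.val) with hE
  -- N kills T
  have NT : ∀ h ∈ T, N h = 0 := by
    suffices H : ∀ m : M, ∀ h ∈ T, ∀ hh : h ≠ 0, leadMon h hh = m → N h = 0 by
      intro h hhT
      obtain ⟨hh, -⟩ := hT h hhT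
      exact H _ h hhT hh rfl
    intro m
    induction m using hwf.induction with
    | _ m ih =>
      intro h hhT hh hlead
      have hm : ¬ Rd T m := fun hr => hr h hhT hh hlead.symm
      set h₀ := pick T m hm with hh₀
      have hsingle : N (Finsupp.single m (1:k)) = nf hwf T hT m := by
        rw [hN, Finsupp.linearCombination_single, one_smul]
      have hN0 : N h₀ = 0 := by
        have h1 : N (Finsupp.single m (1:k)) = N (Finsupp.single m (1:k) - h₀) := by
          rw [hsingle, nf_not hwf T hT hm]
        rw [map_sub] at h1
        exact (sub_eq_self.mp h1.symm)
      -- the two reduction steps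
      have s1 : StepRel T (Finsupp.single m (1:k)) (Finsupp.single m (1:k) - h) := by
        refine ⟨h, hhT, hh, ?_, ?_⟩
        · rw [hlead, Finsupp.single_eq_same]; exact one_ne_zero
        · rw [hlead, Finsupp.single_eq_same, one_smul]
      have s0 : StepRel T (Finsupp.single m (1:k)) (Finsupp.single m (1:k) - h₀) := by
        refine ⟨h₀, pick_mem T m hm, pick_ne T m hm, ?_, ?_⟩
        · rw [pick_lead T m hm, Finsupp.single_eq_same]; exact one_ne_zero
        · rw [pick_lead T m hm, Finsupp.single_eq_same, one_smul]
      have hmem := hamb m _ _ s1 s0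
      have hd : (Finsupp.single m (1:k) - h) - (Finsupp.single m (1:k) - h₀) = h₀ - h := by
        abel
      rw [hd] at hmem
      have hker : Submodule.span k {h' : M →₀ k | h' ∈ T ∧ ∃ hh' : h' ≠ 0, leadMon h' hh' < m}
          ≤ LinearMap.ker N := by
        rw [Submodule.span_le]
        rintro x ⟨hxT, hx0, hxlt⟩
        exact LinearMap.mem_ker.mpr (ih _ hxlt x hxT hx0 rfl)
      have h2 : N (h₀ - h) = 0 := LinearMap.mem_ker.mp (hker hmem)
      rw [map_sub, hN0, zero_sub, neg_eq_zero] at h2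
      exact h2
    -- N ∘ E = id
  have NE : ∀ c : {m : M // Rd T m} →₀ k, N (E c) = c := by
    have : N.comp E = LinearMap.id := by
      apply Finsupp.lhom_ext
      intro a b
      simp only [LinearMap.comp_apply, LinearMap.id_apply, hE, Finsupp.lmapDomain_apply,
        Finsupp.mapDomain_single, hN, Finsupp.linearCombination_single]
      rw [nf_rd hwf T hT a.2]
      simp [Finsupp.smul_single]
    intro c
    have := LinearMap.congr_fun this c
    simpa using this
  -- spanning on monomials
  have spanC : ∀ m : M, Finsupp.single m (1:k) - E (nf hwf T hT m) ∈ Submodule.span k T := by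
    intro m
    induction m using hwf.induction with
    | _ m ih =>
      by_cases hm : Rd T m
      · rw [nf_rd hwf T hT hm, hE]
        simp
      · rw [nf_not hwf T hT hm]
        set g := Finsupp.single m (1:k) - pick T m hm with hg
        have hgrepr : g - E (Finsupp.linearCombination k (nf hwf T hT) g)
            = ∑ x ∈ g.support, g x • (Finsupp.single x (1:k) - E (nf hwf T hT x)) := by
          rw [Finsupp.linearCombination_apply, Finsupp.sum, map_sum]
          simp only [map_smul, smul_sub, Finset.sum_sub_distrib]
          congr 1
          conv_lhs => rw [← Finsupp.sum_single g, Finsupp.sum]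
          refine Finset.sum_congr rfl fun x hx => ?_
          rw [Finsupp.smul_single, smul_eq_mul, mul_one]
        have hgmem : g - E (Finsupp.linearCombination k (nf hwf T hT) g)
            ∈ Submodule.span k T := by
          rw [hgrepr]
          refine Submodule.sum_mem _ fun x hx => ?_
          exact Submodule.smul_mem _ _ (ih x (mem_support_g_lt hT hm hx))
        have hrw : Finsupp.single m (1:k)
            - E (Finsupp.linearCombination k (nf hwf T hT) g)
            = pick T m hm + (g - E (Finsupp.linearCombination k (nf hwf T hT) g)) := by
          rw [hg]; abel
        rw [hrw]
        exact Submodule.add_mem _ (Submodule.subset_span (pick_mem T m hm)) hgmem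
  -- spanning in general
  have spanAll : ∀ f : M →₀ k, f - E (N f) ∈ Submodule.span k T := by
    intro f
    induction f using Finsupp.induction_linear with
    | zero => simp
    | add f g hf hg =>
      have : f + g - E (N (f + g)) = (f - E (N f)) + (g - E (N g)) := by
        rw [map_add, map_add]; abel
      rw [this]; exact Submodule.add_mem _ hf hg
    | single a b =>
      have : Finsupp.single a b - E (N (Finsupp.single a b))
          = b • (Finsupp.single a 1 - E (nf hwf T hT a)) := by
        rw [hN, Finsupp.linearCombination_single, map_smul, smul_sub, Finsupp.smul_single,
          smul_eq_mul, mul_one]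
      rw [this]
      exact Submodule.smul_mem _ _ (spanC a)
  -- the map to the quotient
  set φ : ({m : M // Rd T m} →₀ k) →ₗ[k] ((M →₀ k) ⧸ Submodule.span k T) :=
    (Submodule.span k T).mkQ.comp E with hφ
  have hinj : Function.Injective φ := by
    rw [← LinearMap.ker_eq_bot]
    rw [LinearMap.ker_eq_bot']
    intro c hc
    have hEc : E c ∈ Submodule.span k T := by
      rw [hφ, LinearMap.comp_apply, Submodule.mkQ_apply, Submodule.Quotient.mk_eq_zero] at hc
      exact hc
    have hkerN : Submodule.span k T ≤ LinearMap.ker N := by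
      rw [Submodule.span_le]; intro x hx; exact LinearMap.mem_ker.mpr (NT x hx)
    have : N (E c) = 0 := LinearMap.mem_ker.mp (hkerN hEc)
    rw [NE c] at this
    exact this
  have hsurj : Function.Surjective φ := by
    intro q
    obtain ⟨f, rfl⟩ := Submodule.mkQ_surjective _ q
    refine ⟨N f, ?_⟩
    rw [hφ, LinearMap.comp_apply, Submodule.mkQ_apply, Submodule.mkQ_apply]
    rw [Submodule.Quotient.eq]
    have := spanAll f
    simpa using (Submodule.neg_mem _ this)
  set e := LinearEquiv.ofBijective φ ⟨hinj, hsurj⟩ with he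
  refine ⟨Module.Basis.ofRepr e.symm, ?_⟩
  intro m
  rw [show ((Module.Basis.ofRepr e.symm) m : (M →₀ k) ⧸ Submodule.span k T)
      = e.symm.symm (Finsupp.single m 1) from congrFun (Module.Basis.coe_ofRepr e.symm) m]
  rw [LinearEquiv.symm_symm]
  show e (Finsupp.single m 1) = _
  rw [he]
  show φ (Finsupp.single m 1) = _
  rw [hφ, LinearMap.comp_apply, hE,
    Finsupp.lmapDomain_apply, Finsupp.mapDomain_single, Submodule.mkQ_apply]
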